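/- If f : V → A is independent of J and g : V(n:f) → A is independent of K, then there is a function h : V → A independent of J ∩ K such that V(n:f)(n:g) = V(n:h); moreover, if n ∈ K then h is independent of K. -/

import Mathlib

/-- Two valuations agree outside `J`: they take the same values on all coordinates not in `J`. -/
def AgreeOutside {ι A : Type*} (J : Set ι) (a b : ι → A) : Prop :=
  ∀ i, i ∉ J → a i = b i

/-- `𝒰` is a `J`-saturated disjoint cover of `V`. -/
def IsSatDisjCover {ι A : Type*} (J : Set ι) (V : Set (ι → A))
    (𝒰 : Set (Set (ι → A))) : Prop :=
  ⋃₀ 𝒰 = V ∧ 𝒰.Pairwise Disjoint ∧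
    ∀ a ∈ V, ∀ b ∈ V, AgreeOutside J a b → ∀ U ∈ 𝒰, a ∈ U → b ∈ U

/-- `V = V₁ ∪_J V₂`: a `J`-saturated disjoint (binary) cover of `V`. -/
def UnionJ {ι A : Type*} (J : Set ι) (V V₁ V₂ : Set (ι → A)) : Prop :=
  V₁ ∪ V₂ = V ∧ Disjoint V₁ V₂ ∧
    ∀ a ∈ V, ∀ b ∈ V, AgreeOutside J a b →
      ((a ∈ V₁ → b ∈ V₁) ∧ (a ∈ V₂ → b ∈ V₂))

/-- `f : V → A` is independent of `J`. -/
def IndepOf {ι A : Type*} (J : Set ι) (V : Set (ι → A)) (f : (ι → A) → A) : Prop :=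
  ∀ a ∈ V, ∀ b ∈ V, AgreeOutside J a b → f a = f b

/-- `V(n:f) = { ⃗a(n : f ⃗a) : ⃗a ∈ V }`. -/
def teamUpd {ι A : Type*} [DecidableEq ι] (n : ι) (f : (ι → A) → A)
    (V : Set (ι → A)) : Set (ι → A) :=
  (fun a => Function.update a n (f a)) '' V

/-- `V(n:A) = { ⃗a(n : c) : ⃗a ∈ V, c ∈ A }`. -/
def teamExp {ι A : Type*} [DecidableEq ι] (n : ι) (V : Set (ι → A)) : Set (ι → A) :=
  {x | ∃ a ∈ V, ∃ c : A, x = Function.update a n c}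

/-- Composition of variations: if `f : V → A` is independent of `J` and
`g : V(n:f) → A` is independent of `K`, there is `h : V → A` independent of `J ∩ K`
with `V(n:f)(n:g) = V(n:h)`; moreover if `n ∈ K` then `h` is independent of `K`. -/
theorem exists_comp_indep {ι A : Type*} [DecidableEq ι] (J K : Set ι) (n : ι)
    (V : Set (ι → A)) (f g : (ι → A) → A)
    (hf : IndepOf J V f) (hg : IndepOf K (teamUpd n f V) g) :
    ∃ h : (ι → A) → A, IndepOf (J ∩ K) V h ∧
      teamUpd n g (teamUpd n f V) = teamUpd n h V ∧
      (n ∈ K → IndepOf K V h) := by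
  refine ⟨fun a => g (Function.update a n (f a)), ?_, ?_, ?_⟩
  · intro a ha b hb hab
    have hfab : f a = f b := hf a ha b hb (fun i hi => hab i (fun h => hi h.1))
    apply hg _ ⟨a, ha, rfl⟩ _ ⟨b, hb, rfl⟩
    intro i hiK
    by_cases hin : i = n
    · subst hin; simp [hfab]
    · show Function.update a n (f a) i = Function.update b n (f b) i
      rw [Function.update_of_ne hin, Function.update_of_ne hin]
      exact hab i (fun h => hiK h.2)
  · ext x
    constructor
    · rintro ⟨y, ⟨a, ha, rfl⟩, rfl⟩
      exact ⟨a, ha, by simp [Function.update_idem]⟩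
    · rintro ⟨a, ha, rfl⟩
      exact ⟨Function.update a n (f a), ⟨a, ha, rfl⟩, by simp [Function.update_idem]⟩
  · intro hnK a ha b hb hab
    apply hg _ ⟨a, ha, rfl⟩ _ ⟨b, hb, rfl⟩
    intro i hiK
    have hin : i ≠ n := fun h => hiK (h ▸ hnK)
    show Function.update a n (f a) i = Function.update b n (f b) i
    rw [Function.update_of_ne hin, Function.update_of_ne hin]
    exact hab i hiK
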